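/- arXiv:1608.06067 — 2 statements merged into one kernel-verified Lean document; each statement's English description precedes it below -/
import Mathlib

section
/- For every c > 0, R > 0, ε > 0 and α > 2, F_ε(c,R) ≤ (c/(πR²))·(∫_{ℝ²} g_ε(x) dx)². In particular, for any sequences (c_k) and (R_k) of positive reals with c_k/R_k² → 0, one has F_ε(c_k, R_k) → 0. (This bound yields the convergence ζ_M → ζ_P claimed in Proposition 2 when c/R² → 0.) -/
open MeasureTheory Real Filter

/-- The lens-area function `A_R(r)`. -/
noncomputable def lensArea (R r : ℝ) : ℝ :=
  if r ≤ 2 * R then 2 * R ^ 2 * Real.arccos (r / (2 * R)) - r * Real.sqrt (R ^ 2 - r ^ 2 / 4)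
  else 0

/-- The regularized path-loss function `g_ε(x) = 1/(ε + |x|^α)` on `ℝ²`. -/
noncomputable def gE (ε α : ℝ) (x : EuclideanSpace ℝ (Fin 2)) : ℝ :=
  1 / (ε + ‖x‖ ^ α)

/-- The quantity `F_ε(c, R)`. -/
noncomputable def Feps (ε α c R : ℝ) : ℝ :=
  (c / (π ^ 2 * R ^ 4)) *
    ∫ x : EuclideanSpace ℝ (Fin 2), ∫ y : EuclideanSpace ℝ (Fin 2),
      gE ε α x * gE ε α y * lensArea R ‖x - y‖

lemma lensArea_nonneg {R r : ℝ} (hR : 0 < R) (hr : 0 ≤ r) : 0 ≤ lensArea R r := by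
  unfold lensArea
  split_ifs with h
  · set t := r / (2 * R) with ht
    have ht0 : 0 ≤ t := by positivity
    have ht1 : t ≤ 1 := by
      rw [ht, div_le_one (by linarith)]; exact h
    have hsin : √(1 - t ^ 2) ≤ Real.arccos t := by
      have := Real.sin_le (Real.arccos_nonneg t)
      rwa [Real.sin_arccos] at this
    have hsq : √(R ^ 2 - r ^ 2 / 4) = R * √(1 - t ^ 2) := by
      rw [← Real.sqrt_sq hR.le, ← Real.sqrt_mul (by positivity)]
      congr 1
      field_simp [ht]
      rw [Real.sq_sqrt (by positivity), ht]
      field_simp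
      ring
    have hrt : r = 2 * R * t := by rw [ht]; field_simp
    have hs0 : 0 ≤ √(1 - t ^ 2) := Real.sqrt_nonneg _
    rw [hsq, hrt]
    have key : t * √(1 - t ^ 2) ≤ Real.arccos t := by
      nlinarith [mul_nonneg (sub_nonneg.2 ht1) hs0]
    nlinarith [mul_le_mul_of_nonneg_left key (by positivity : (0:ℝ) ≤ 2 * R ^ 2)]
  · exact le_refl 0

lemma lensArea_le {R r : ℝ} (hR : 0 < R) (hr : 0 ≤ r) : lensArea R r ≤ π * R ^ 2 := by
  unfold lensArea
  split_ifs with h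
  · have h1 : Real.arccos (r / (2 * R)) ≤ π / 2 :=
      Real.arccos_le_pi_div_two.2 (by positivity)
    have h2 : 0 ≤ r * √(R ^ 2 - r ^ 2 / 4) := mul_nonneg hr (Real.sqrt_nonneg _)
    nlinarith [sq_nonneg R]
  · positivity

lemma gE_pos (ε α : ℝ) (hε : 0 < ε) (x : EuclideanSpace ℝ (Fin 2)) : 0 < gE ε α x := by
  unfold gE
  have : (0:ℝ) < ε + ‖x‖ ^ α := by
    have := Real.rpow_nonneg (norm_nonneg x) α
    linarith
  positivity

lemma gE_cont (ε α : ℝ) (hε : 0 < ε) (hα : 0 < α) : Continuous (gE ε α) := by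
  unfold gE
  apply Continuous.div continuous_const
  · exact continuous_const.add (continuous_norm.rpow_const fun x => Or.inr hα.le)
  · intro x
    have := Real.rpow_nonneg (norm_nonneg x) α
    positivity

lemma gE_integrable (ε α : ℝ) (hε : 0 < ε) (hα : 2 < α) : Integrable (gE ε α) := by
  have hα0 : (0:ℝ) < α := by linarith
  have hfin : ((Module.finrank ℝ (EuclideanSpace ℝ (Fin 2)) : ℝ)) < α := by
    rw [finrank_euclideanSpace_fin]; exact_mod_cast hα
  have hmaj : Integrable (fun x : EuclideanSpace ℝ (Fin 2) =>
      (2 ^ α / min ε 1) * (1 + ‖x‖) ^ (-α)) :=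
    (integrable_one_add_norm hfin).const_mul _
  refine hmaj.mono' ((gE_cont ε α hε hα0).aestronglyMeasurable) (ae_of_all _ fun x => ?_)
  rw [Real.norm_of_nonneg (gE_pos ε α hε x).le]
  unfold gE
  have hden : (0:ℝ) < ε + ‖x‖ ^ α := by
    have := Real.rpow_nonneg (norm_nonneg x) α
    linarith
  have h1 : (1 + ‖x‖) ^ (-α) = 1 / (1 + ‖x‖) ^ α := by
    rw [Real.rpow_neg (by positivity), one_div]
  rw [h1, div_mul_div_comm, mul_one, div_le_div_iff₀ hden (by positivity)]
  have hmin : 0 < min ε 1 := lt_min hε one_pos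
  rcases le_total (‖x‖) 1 with hx | hx
  · have hb : (1 + ‖x‖) ^ α ≤ 2 ^ α :=
      Real.rpow_le_rpow (by positivity) (by linarith) hα0.le
    have : min ε 1 ≤ ε := min_le_left _ _
    nlinarith [Real.rpow_nonneg (norm_nonneg x) α, Real.rpow_nonneg (by positivity : (0:ℝ) ≤ 1 + ‖x‖) α, Real.rpow_pos_of_pos (by norm_num : (0:ℝ) < 2) α]
  · have hb : (1 + ‖x‖) ^ α ≤ (2 * ‖x‖) ^ α :=
      Real.rpow_le_rpow (by positivity) (by linarith) hα0.le
    rw [Real.mul_rpow (by norm_num) (norm_nonneg x)] at hb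
    have : min ε 1 ≤ 1 := min_le_right _ _
    nlinarith [Real.rpow_pos_of_pos (by norm_num : (0:ℝ) < 2) α, Real.rpow_nonneg (by positivity : (0:ℝ) ≤ 1 + ‖x‖) α]

theorem stmt8 (ε α : ℝ) (hε : 0 < ε) (hα : 2 < α) :
    (∀ c R : ℝ, 0 < c → 0 < R →
      Feps ε α c R ≤ (c / (π * R ^ 2)) * (∫ x : EuclideanSpace ℝ (Fin 2), gE ε α x) ^ 2) ∧
    (∀ c R : ℕ → ℝ, (∀ k, 0 < c k) → (∀ k, 0 < R k) →
      Tendsto (fun k => c k / (R k) ^ 2) atTop (nhds 0) →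
      Tendsto (fun k => Feps ε α (c k) (R k)) atTop (nhds 0)) := by
  have hI : Integrable (gE ε α) := gE_integrable ε α hε hα
  have hg : ∀ x, 0 ≤ gE ε α x := fun x => (gE_pos ε α hε x).le
  set I : ℝ := ∫ x : EuclideanSpace ℝ (Fin 2), gE ε α x with hIdef
  have hI0 : 0 ≤ I := integral_nonneg hg
  have hπ : 0 < π := Real.pi_pos
  have part1 : ∀ c R : ℝ, 0 < c → 0 < R →
      Feps ε α c R ≤ (c / (π * R ^ 2)) * I ^ 2 := by
    intro c R hc hR
    have hAnn : ∀ x y : EuclideanSpace ℝ (Fin 2),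
        0 ≤ gE ε α x * gE ε α y * lensArea R ‖x - y‖ := fun x y =>
      mul_nonneg (mul_nonneg (hg x) (hg y)) (lensArea_nonneg hR (norm_nonneg _))
    have inner_le : ∀ x : EuclideanSpace ℝ (Fin 2),
        (∫ y : EuclideanSpace ℝ (Fin 2), gE ε α x * gE ε α y * lensArea R ‖x - y‖)
          ≤ (gE ε α x * (π * R ^ 2) * I) := by
      intro x
      have := integral_mono_of_nonneg (f := fun y : EuclideanSpace ℝ (Fin 2) =>
          gE ε α x * gE ε α y * lensArea R ‖x - y‖)
        (g := fun y => (gE ε α x * (π * R ^ 2)) * gE ε α y)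
        (ae_of_all _ fun y => hAnn x y) (hI.const_mul _)
        (ae_of_all _ fun y => by
          calc gE ε α x * gE ε α y * lensArea R ‖x - y‖
              ≤ gE ε α x * gE ε α y * (π * R ^ 2) :=
                mul_le_mul_of_nonneg_left (lensArea_le hR (norm_nonneg _))
                  (mul_nonneg (hg x) (hg y))
            _ = (gE ε α x * (π * R ^ 2)) * gE ε α y := by ring)
      rw [integral_const_mul] at this
      calc (∫ y : EuclideanSpace ℝ (Fin 2), gE ε α x * gE ε α y * lensArea R ‖x - y‖)
          ≤ (gE ε α x * (π * R ^ 2)) * I := this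
        _ = gE ε α x * (π * R ^ 2) * I := by ring
    have outer_le : (∫ x : EuclideanSpace ℝ (Fin 2), ∫ y : EuclideanSpace ℝ (Fin 2),
        gE ε α x * gE ε α y * lensArea R ‖x - y‖) ≤ (π * R ^ 2 * I) * I := by
      have := integral_mono_of_nonneg
        (f := fun x : EuclideanSpace ℝ (Fin 2) => ∫ y : EuclideanSpace ℝ (Fin 2),
          gE ε α x * gE ε α y * lensArea R ‖x - y‖)
        (g := fun x => (π * R ^ 2 * I) * gE ε α x)
        (ae_of_all _ fun x => integral_nonneg fun y => hAnn x y)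
        (hI.const_mul _)
        (ae_of_all _ fun x => (inner_le x).trans_eq (by ring))
      rwa [integral_const_mul] at this
    have hconst : (0:ℝ) ≤ c / (π ^ 2 * R ^ 4) := div_nonneg hc.le (by positivity)
    have heq : c / (π ^ 2 * R ^ 4) * ((π * R ^ 2 * I) * I) = (c / (π * R ^ 2)) * I ^ 2 := by
      field_simp
    calc Feps ε α c R
        ≤ c / (π ^ 2 * R ^ 4) * ((π * R ^ 2 * I) * I) :=
          mul_le_mul_of_nonneg_left outer_le hconst
      _ = (c / (π * R ^ 2)) * I ^ 2 := heq
  refine ⟨part1, ?_⟩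
  intro c R hc hR hlim
  have lower : ∀ k, 0 ≤ Feps ε α (c k) (R k) := by
    intro k
    have hdbl : 0 ≤ ∫ x : EuclideanSpace ℝ (Fin 2), ∫ y : EuclideanSpace ℝ (Fin 2),
        gE ε α x * gE ε α y * lensArea (R k) ‖x - y‖ :=
      integral_nonneg fun x => integral_nonneg fun y =>
        mul_nonneg (mul_nonneg (hg x) (hg y)) (lensArea_nonneg (hR k) (norm_nonneg _))
    have hc' : (0:ℝ) ≤ c k / (π ^ 2 * (R k) ^ 4) := div_nonneg (hc k).le (by positivity)
    exact mul_nonneg hc' hdbl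
  have upper : ∀ k, Feps ε α (c k) (R k) ≤ (c k / (R k) ^ 2) * (I ^ 2 / π) := by
    intro k
    refine (part1 (c k) (R k) (hc k) (hR k)).trans_eq ?_
    ring
  have hlim' : Tendsto (fun k => (c k / (R k) ^ 2) * (I ^ 2 / π)) atTop (nhds 0) := by
    simpa using hlim.mul_const (I ^ 2 / π)
  exact squeeze_zero lower upper hlim'
end

section
/- (Planar form of the exponent in Lemma 5) Let α > 2, δ = 2/α, θ > 0 and let n ≥ 1 be an integer. Then the function x ↦ 1 − (1 + θ·|x|^{−α})^{−n} is Lebesgue integrable on ℝ² and ∫_{ℝ²} (1 − (1 + θ·|x|^{−α})^{−n}) dx = π·θ^{δ}·Γ(1 − δ)·Γ(n + δ)/Γ(n). -/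
open MeasureTheory Real

open Set

lemma realBeta {a b : ℝ} (ha : 0 < a) (hb : 0 < b) :
    ∫ x in (0:ℝ)..1, x ^ (a-1) * (1-x) ^ (b-1) = Gamma a * Gamma b / Gamma (a+b) := by
  have key : Complex.betaIntegral a b =
      ((∫ x in (0:ℝ)..1, x ^ (a-1) * (1-x) ^ (b-1) : ℝ) : ℂ) := by
    rw [Complex.betaIntegral, ← intervalIntegral.integral_ofReal]
    refine intervalIntegral.integral_congr fun x hx => ?_
    rw [uIcc_of_le zero_le_one] at hx
    rw [Complex.ofReal_mul, Complex.ofReal_cpow hx.1, Complex.ofReal_cpow (by linarith [hx.2] : (0:ℝ) ≤ 1 - x)]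
    push_cast
    ring
  have hG := Complex.Gamma_mul_Gamma_eq_betaIntegral
    (s := (a:ℂ)) (t := (b:ℂ)) (by simpa using ha) (by simpa using hb)
  rw [key] at hG
  have hab : Complex.Gamma ((a:ℂ) + b) = ((Gamma (a+b) : ℝ) : ℂ) := by
    rw [← Complex.ofReal_add, Complex.Gamma_ofReal]
  rw [Complex.Gamma_ofReal, Complex.Gamma_ofReal, hab] at hG
  have h := congrArg Complex.re hG
  simp only [← Complex.ofReal_mul, Complex.ofReal_re] at h
  have hpos : Gamma (a+b) ≠ 0 := (Gamma_pos_of_pos (by linarith)).ne'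
  field_simp
  linarith [h]


lemma betaIoi {a b : ℝ} (ha : 0 < a) (hb : 0 < b) :
    IntegrableOn (fun t : ℝ => t ^ (a-1) * (1+t) ^ (-(a+b))) (Ioi 0) volume ∧
    ∫ t in Ioi (0:ℝ), t ^ (a-1) * (1+t) ^ (-(a+b)) = Gamma a * Gamma b / Gamma (a+b) := by
  set s : Set ℝ := Ioo 0 1 with hs
  set f : ℝ → ℝ := fun x => x / (1-x) with hf
  have hms : MeasurableSet s := measurableSet_Ioo
  have hderiv : ∀ x ∈ s, HasDerivWithinAt f (((1-x)^2)⁻¹) s x := by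
    intro x hx
    have h1 : (1:ℝ) - x ≠ 0 := by simp only [hs, mem_Ioo] at hx; intro h; nlinarith [hx.1, hx.2]
    have := ((hasDerivAt_id x).div ((hasDerivAt_id x).const_sub 1) h1)
    simp only [id_eq, one_mul, mul_neg, mul_one, sub_neg_eq_add] at this
    convert this.hasDerivWithinAt using 1
    exacts [rfl, rfl, rfl, by ring]
  have hinj : InjOn f s := by
    intro x hx y hy hxy
    simp only [hs, mem_Ioo] at hx hy
    have h1 : (1:ℝ) - x ≠ 0 := by intro h; nlinarith [hx.1, hx.2]
    have h2 : (1:ℝ) - y ≠ 0 := by intro h; nlinarith [hy.1, hy.2]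
    rw [hf, div_eq_div_iff h1 h2] at hxy
    nlinarith [hxy]
  have himg : f '' s = Ioi 0 := by
    ext t
    constructor
    · rintro ⟨x, hx, rfl⟩
      simp only [hs, mem_Ioo] at hx
      exact div_pos hx.1 (by linarith [hx.2])
    · intro ht
      have ht' : (0:ℝ) < t := ht
      refine ⟨t / (1+t), ⟨div_pos ht' (by linarith), ?_⟩, ?_⟩
      · rw [div_lt_one (by linarith)]; linarith
      · rw [hf]
        have h1 : (1:ℝ) + t ≠ 0 := by positivity
        field_simp
        ring
  -- pointwise identity of transformed integrand on s
  have hpt : ∀ x ∈ s, |((1-x)^2)⁻¹| • ((f x) ^ (a-1) * (1 + f x) ^ (-(a+b)))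
      = x ^ (a-1) * (1-x) ^ (b-1) := by
    intro x hx
    simp only [hs, mem_Ioo] at hx
    have h0x : (0:ℝ) < x := hx.1
    have h1x : (0:ℝ) < 1 - x := by linarith [hx.2]
    have hfx : 1 + f x = (1-x)⁻¹ := by rw [hf]; field_simp; ring
    have hfx2 : f x = x * (1-x)⁻¹ := by rw [hf]; field_simp
    rw [smul_eq_mul, hfx, hfx2, abs_of_pos (by positivity),
      Real.mul_rpow h0x.le (by positivity),
      ← Real.rpow_neg_one (1-x), ← Real.rpow_natCast (1-x) 2,
      ← Real.rpow_mul h1x.le, ← Real.rpow_mul h1x.le, ← Real.rpow_neg h1x.le]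
    have hmm : ∀ (p q r u : ℝ), p + q + r = u →
        (1-x)^p * (x^(a-1) * (1-x)^q * (1-x)^r) = x^(a-1) * (1-x)^u := by
      intro p q r u h
      rw [← h, Real.rpow_add h1x, Real.rpow_add h1x]; ring
    exact hmm _ _ _ _ (by push_cast; ring)
  have hIoo : IntegrableOn (fun x : ℝ => x ^ (a-1) * (1-x) ^ (b-1)) s volume := by
    have hc := Complex.betaIntegral_convergent (u := (a:ℂ)) (v := (b:ℂ))
      (by simpa using ha) (by simpa using hb)
    have h1 : IntegrableOn (fun x : ℝ => ((x:ℂ) ^ ((a:ℂ)-1) * ((1:ℂ)-x) ^ ((b:ℂ)-1)).re)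
        (Ioc (0:ℝ) 1) volume := hc.1.re
    refine (h1.mono_set Ioo_subset_Ioc_self).congr_fun ?_ hms
    intro x hx
    simp only [hs, mem_Ioo] at hx
    have e : (x:ℂ) ^ ((a:ℂ)-1) * ((1:ℂ)-x) ^ ((b:ℂ)-1)
        = ((x ^ (a-1) * (1-x) ^ (b-1) : ℝ) : ℂ) := by
      rw [Complex.ofReal_mul, Complex.ofReal_cpow hx.1.le,
        Complex.ofReal_cpow (by linarith [hx.2] : (0:ℝ) ≤ 1 - x)]
      push_cast
      ring
    simp [e]
  constructor
  · rw [← himg, integrableOn_image_iff_integrableOn_abs_deriv_smul hms hderiv hinj]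
    exact hIoo.congr_fun (fun x hx => (hpt x hx).symm) hms
  · rw [← himg, integral_image_eq_integral_abs_deriv_smul hms hderiv hinj,
      setIntegral_congr_fun hms hpt, ← realBeta ha hb,
      intervalIntegral.integral_of_le zero_le_one, integral_Ioc_eq_integral_Ioo]

lemma betaTerm {δ : ℝ} (h0 : 0 < δ) (h1 : δ < 1) (k : ℕ) (hk : 1 ≤ k) :
    IntegrableOn (fun t : ℝ => t ^ (-δ) * (1+t) ^ (-(k:ℝ))) (Ioi 0) volume ∧
    ∫ t in Ioi (0:ℝ), t ^ (-δ) * (1+t) ^ (-(k:ℝ))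
      = Gamma (1-δ) * Gamma ((k:ℝ)-1+δ) / Gamma k := by
  have hk' : (1:ℝ) ≤ (k:ℝ) := by exact_mod_cast hk
  have h := betaIoi (a := 1-δ) (b := (k:ℝ)-1+δ) (by linarith) (by linarith)
  have e1 : (1-δ) - 1 = -δ := by ring
  have e2 : -((1-δ) + ((k:ℝ)-1+δ)) = -(k:ℝ) := by ring
  have e3 : (1-δ) + ((k:ℝ)-1+δ) = (k:ℝ) := by ring
  rw [e1, e2, e3] at h
  exact h

lemma Kint {δ : ℝ} (h0 : 0 < δ) (h1 : δ < 1) (n : ℕ) (hn : 1 ≤ n) :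
    IntegrableOn (fun y : ℝ => y ^ (-δ-1) * (1 - ((1+y)^n)⁻¹)) (Ioi 0) volume ∧
    ∫ y in Ioi (0:ℝ), y ^ (-δ-1) * (1 - ((1+y)^n)⁻¹)
      = δ⁻¹ * Gamma (1-δ) * Gamma (n+δ) / Gamma n := by
  induction n, hn using Nat.le_induction with
  | base =>
    obtain ⟨hi, hv⟩ := betaTerm h0 h1 1 le_rfl
    have hpt : ∀ y ∈ Ioi (0:ℝ),
        y ^ (-δ) * (1+y) ^ (-((1:ℕ):ℝ)) = y ^ (-δ-1) * (1 - ((1+y)^1)⁻¹) := by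
      intro y hy
      have hy0 : (0:ℝ) < y := hy
      have h1y : (0:ℝ) < 1+y := by linarith
      have e : 1 - ((1+y)^1)⁻¹ = y * (1+y)⁻¹ := by rw [pow_one]; field_simp; ring
      rw [e, show -δ = (-δ-1)+1 by ring, Real.rpow_add hy0, Real.rpow_one,
        Real.rpow_neg h1y.le, Real.rpow_natCast, pow_one]
      ring
    constructor
    · exact hi.congr_fun hpt measurableSet_Ioi
    · rw [← setIntegral_congr_fun measurableSet_Ioi hpt, hv]
      have hg : Gamma (δ+1) = δ * Gamma δ := Real.Gamma_add_one h0.ne'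
      push_cast
      rw [show (1:ℝ)-1+δ = δ by ring, show (1:ℝ)+δ = δ+1 by ring, hg, Real.Gamma_one]
      field_simp
  | succ n hn ih =>
    obtain ⟨hi, hv⟩ := betaTerm h0 h1 (n+1) (by omega)
    have hpt : ∀ y ∈ Ioi (0:ℝ),
        y ^ (-δ-1) * (1 - ((1+y)^n)⁻¹) + y ^ (-δ) * (1+y) ^ (-((n+1:ℕ):ℝ))
          = y ^ (-δ-1) * (1 - ((1+y)^(n+1))⁻¹) := by
      intro y hy
      have hy0 : (0:ℝ) < y := hy
      have h1y : (0:ℝ) < 1+y := by linarith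
      have hne : (1+y) ≠ 0 := h1y.ne'
      rw [show -δ = (-δ-1)+1 by ring, Real.rpow_add hy0, Real.rpow_one,
        Real.rpow_neg h1y.le, Real.rpow_natCast]
      have hpn : (1+y)^n ≠ 0 := pow_ne_zero _ hne
      have hpn1 : (1+y)^(n+1) ≠ 0 := pow_ne_zero _ hne
      field_simp
      ring
    constructor
    · have hsum : IntegrableOn (fun y : ℝ => y ^ (-δ-1) * (1 - ((1+y)^n)⁻¹)
          + y ^ (-δ) * (1+y) ^ (-((n+1:ℕ):ℝ))) (Ioi 0) volume := ih.1.add hi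
      exact hsum.congr_fun hpt measurableSet_Ioi
    · rw [← setIntegral_congr_fun measurableSet_Ioi hpt,
        integral_add ih.1 hi, ih.2, hv]
      have hn0 : ((n:ℝ)) ≠ 0 := Nat.cast_ne_zero.mpr (by omega)
      have hnpos : (0:ℝ) < (n:ℝ) := by exact_mod_cast Nat.pos_of_ne_zero (by omega)
      have hGn : Gamma ((n:ℝ)) ≠ 0 := (Real.Gamma_pos_of_pos hnpos).ne'
      have hnδ : ((n:ℝ)+δ) ≠ 0 := by positivity
      push_cast
      rw [show (n:ℝ)+1-1+δ = (n:ℝ)+δ by ring, show (n:ℝ)+1+δ = ((n:ℝ)+δ)+1 by ring,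
        Real.Gamma_add_one hnδ, show (n:ℝ)+1 = (n:ℝ)+1 by ring, Real.Gamma_add_one hn0]
      field_simp


lemma bound_aux (w : ℝ) (hw : 0 ≤ w) (n : ℕ) :
    0 ≤ 1 - ((1+w)^n)⁻¹ ∧ 1 - ((1+w)^n)⁻¹ ≤ (n:ℝ) * w := by
  have h1w : (0:ℝ) < 1 + w := by linarith
  have hP : ∀ m : ℕ, (1:ℝ) ≤ (1+w)^m := fun m => one_le_pow₀ (by linarith)
  constructor
  · have := inv_le_one_of_one_le₀ (hP n)
    linarith
  · induction n with
    | zero => simp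
    | succ n ih =>
      have hPn : (0:ℝ) < (1+w)^n := pow_pos h1w n
      have e : 1 - ((1+w)^(n+1))⁻¹
          = (1 - ((1+w)^n)⁻¹) + ((1+w)^n)⁻¹ * (1 - (1+w)⁻¹) := by
        rw [pow_succ]
        field_simp
        ring
      have h2 : 1 - (1+w)⁻¹ ≤ w := by
        have hq : (1+w)⁻¹ * (1+w) = 1 := inv_mul_cancel₀ h1w.ne'
        nlinarith [inv_nonneg.mpr h1w.le]
      have h3 : ((1+w)^n)⁻¹ ≤ 1 := inv_le_one_of_one_le₀ (hP n)
      have h4 : (0:ℝ) ≤ ((1+w)^n)⁻¹ := inv_nonneg.mpr hPn.le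
      have h5 : (0:ℝ) ≤ 1 - (1+w)⁻¹ := by
        have := inv_le_one_of_one_le₀ (hP 1)
        simp only [pow_one] at this
        linarith
      push_cast
      nlinarith [mul_le_mul_of_nonneg_right h3 h5]

theorem stmt18 (α θ : ℝ) (hα : 2 < α) (hθ : 0 < θ) (n : ℕ) (hn : 1 ≤ n)
    (δ : ℝ) (hδ : δ = 2 / α) :
    Integrable (fun x : EuclideanSpace ℝ (Fin 2) => 1 - ((1 + θ * ‖x‖ ^ (-α)) ^ n)⁻¹) volume ∧
    (∫ x : EuclideanSpace ℝ (Fin 2), (1 - ((1 + θ * ‖x‖ ^ (-α)) ^ n)⁻¹))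
      = π * θ ^ δ * Real.Gamma (1 - δ) * Real.Gamma (n + δ) / Real.Gamma n := by
  have hα0 : (0:ℝ) < α := by linarith
  have hδ0 : 0 < δ := by rw [hδ]; positivity
  have hδ1 : δ < 1 := by rw [hδ, div_lt_one hα0]; linarith
  set E := EuclideanSpace ℝ (Fin 2)
  set f : ℝ → ℝ := fun r => 1 - ((1 + θ * r ^ (-α)) ^ n)⁻¹ with hfdef
  have h2pos : (0:ℝ) < 2 ^ α := rpow_pos_of_pos two_pos α
  set C : ℝ := 2 ^ α * max 1 ((n:ℝ) * θ) with hCdef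
  have hC1 : (1:ℝ) ≤ max 1 ((n:ℝ) * θ) := le_max_left _ _
  -- integrability
  have hInt : Integrable (fun x : E => 1 - ((1 + θ * ‖x‖ ^ (-α)) ^ n)⁻¹) volume := by
    have hmeas : Measurable (fun x : E => 1 - ((1 + θ * ‖x‖ ^ (-α)) ^ n)⁻¹) := by
      exact (((((measurable_norm.pow_const (-α) : Measurable _).const_mul θ).const_add
        1).pow_const n).inv).const_sub 1
    have hg : Integrable (fun x : E => C * (1 + ‖x‖) ^ (-α)) volume := by
      refine (integrable_one_add_norm ?_).const_mul C
      rw [finrank_euclideanSpace_fin]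
      norm_num
      linarith
    refine hg.mono' hmeas.aestronglyMeasurable (Filter.Eventually.of_forall fun x => ?_)
    set r : ℝ := ‖x‖ with hr
    have hr0 : 0 ≤ r := norm_nonneg x
    have hw : 0 ≤ θ * r ^ (-α) := by positivity
    obtain ⟨hb0, hb1⟩ := bound_aux (θ * r ^ (-α)) hw n
    have habs : ‖1 - ((1 + θ * r ^ (-α)) ^ n)⁻¹‖ = 1 - ((1 + θ * r ^ (-α)) ^ n)⁻¹ :=
      Real.norm_of_nonneg hb0
    rw [habs]
    have hfx1 : 1 - ((1 + θ * r ^ (-α)) ^ n)⁻¹ ≤ 1 := by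
      have : (0:ℝ) ≤ ((1 + θ * r ^ (-α)) ^ n)⁻¹ := by positivity
      linarith
    have h1rpos : (0:ℝ) < 1 + r := by linarith
    rcases le_total r 1 with hcase | hcase
    · have h2 : (1+r) ^ α ≤ 2 ^ α := Real.rpow_le_rpow (by positivity) (by linarith) hα0.le
      have h3 : ((2:ℝ) ^ α)⁻¹ ≤ ((1+r) ^ α)⁻¹ :=
        inv_anti₀ (rpow_pos_of_pos h1rpos α) h2
      have hipos : (0:ℝ) < ((1+r) ^ α)⁻¹ := by positivity
      rw [Real.rpow_neg h1rpos.le]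
      have step1 : (1:ℝ) ≤ 2 ^ α * ((1+r) ^ α)⁻¹ := by
        have := mul_le_mul_of_nonneg_left h3 h2pos.le
        rwa [mul_inv_cancel₀ h2pos.ne'] at this
      have step2 : 2 ^ α * ((1+r) ^ α)⁻¹ ≤ C * ((1+r) ^ α)⁻¹ := by
        refine mul_le_mul_of_nonneg_right ?_ hipos.le
        exact le_mul_of_one_le_right h2pos.le hC1
      linarith
    · have hr1 : (0:ℝ) < r := lt_of_lt_of_le one_pos hcase
      have h2 : (1+r) ^ α ≤ (2*r) ^ α := Real.rpow_le_rpow (by positivity) (by linarith) hα0.le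
      have h4 : ((2*r):ℝ) ^ α = 2 ^ α * r ^ α := Real.mul_rpow (by norm_num) hr1.le
      have h6 : ((2:ℝ) ^ α * r ^ α)⁻¹ ≤ ((1+r) ^ α)⁻¹ :=
        inv_anti₀ (rpow_pos_of_pos h1rpos α) (h2.trans_eq h4)
      have h7 : (r ^ α)⁻¹ ≤ 2 ^ α * ((1+r) ^ α)⁻¹ := by
        have := mul_le_mul_of_nonneg_left h6 h2pos.le
        rwa [mul_inv, ← mul_assoc, mul_inv_cancel₀ h2pos.ne', one_mul] at this
      have hb1' : 1 - ((1 + θ * r ^ (-α)) ^ n)⁻¹ ≤ (n:ℝ) * θ * (r ^ α)⁻¹ := by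
        rw [Real.rpow_neg hr1.le] at hb1 ⊢
        linarith [hb1]
      rw [Real.rpow_neg h1rpos.le]
      have hnθ : (0:ℝ) ≤ (n:ℝ) * θ := by positivity
      have h8 : (n:ℝ) * θ * (r ^ α)⁻¹ ≤ (n:ℝ) * θ * (2 ^ α * ((1+r) ^ α)⁻¹) :=
        mul_le_mul_of_nonneg_left h7 hnθ
      have h9 : (n:ℝ) * θ * (2 ^ α * ((1+r) ^ α)⁻¹) ≤ C * ((1+r) ^ α)⁻¹ := by
        have hip : (0:ℝ) ≤ ((1+r) ^ α)⁻¹ := by positivity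
        have := mul_le_mul_of_nonneg_right
          (mul_le_mul_of_nonneg_left (le_max_right 1 ((n:ℝ)*θ)) h2pos.le)
          hip
        calc (n:ℝ) * θ * (2 ^ α * ((1+r) ^ α)⁻¹)
            = 2 ^ α * ((n:ℝ)*θ) * ((1+r) ^ α)⁻¹ := by ring
          _ ≤ 2 ^ α * max 1 ((n:ℝ)*θ) * ((1+r) ^ α)⁻¹ := this
          _ = C * ((1+r) ^ α)⁻¹ := rfl
      linarith
  refine ⟨hInt, ?_⟩
  -- polar coordinates
  have hpolar := MeasureTheory.integral_fun_norm_addHaar (volume : Measure E) f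
  rw [show (fun x : E => 1 - ((1 + θ * ‖x‖ ^ (-α)) ^ n)⁻¹) = (fun x : E => f ‖x‖) from rfl]
  have hdim : Module.finrank ℝ E = 2 := finrank_euclideanSpace_fin
  rw [hdim] at hpolar
  have hball : (volume (Metric.ball (0:E) 1)).toReal = π := by
    rw [EuclideanSpace.volume_ball]
    norm_num [Fintype.card_fin]
    rw [Real.sq_sqrt pi_nonneg]
  rw [measureReal_def, hball] at hpolar
  simp only [smul_eq_mul, nsmul_eq_mul, pow_one] at hpolar
  norm_num at hpolar
  rw [hpolar]
  -- substitution y = x ^ (-α)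
  set g : ℝ → ℝ := fun y => α⁻¹ * (y ^ (-δ-1) * (1 - ((1 + θ * y) ^ n)⁻¹)) with hgdef
  have hαδ : (-α) * (-δ-1) = 2 + α := by rw [hδ]; field_simp; ring
  have hchg := integral_comp_rpow_Ioi g (p := -α) (neg_ne_zero.mpr hα0.ne')
  have hpt2 : ∀ x ∈ Ioi (0:ℝ), (|(-α)| * x ^ ((-α)-1)) • g (x ^ (-α)) = x * f x := by
    intro x hx
    have hx0 : (0:ℝ) < x := hx
    have e1 : x ^ ((-α)-1) * x ^ (2+α) = x := by
      rw [← Real.rpow_add hx0, show (-α)-1+(2+α) = 1 by ring, Real.rpow_one]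
    rw [smul_eq_mul, hgdef, hfdef]
    simp only
    rw [← Real.rpow_mul hx0.le, hαδ, abs_neg, abs_of_pos hα0]
    calc α * x ^ ((-α)-1) * (α⁻¹ * (x ^ (2+α) * (1 - ((1 + θ * x ^ (-α)) ^ n)⁻¹)))
        = (α * α⁻¹) * ((x ^ ((-α)-1) * x ^ (2+α)) * (1 - ((1 + θ * x ^ (-α)) ^ n)⁻¹)) := by
          ring
      _ = x * (1 - ((1 + θ * x ^ (-α)) ^ n)⁻¹) := by
          rw [mul_inv_cancel₀ hα0.ne', e1, one_mul]
  have hstep1 : ∫ y in Ioi (0:ℝ), y * f y = ∫ y in Ioi (0:ℝ), g y := by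
    rw [← hchg]
    exact (setIntegral_congr_fun measurableSet_Ioi hpt2).symm
  -- pull out α⁻¹ and rescale y ↦ θ y
  set h : ℝ → ℝ := fun z => z ^ (-δ-1) * (1 - ((1+z)^n)⁻¹) with hhdef
  have hpt3 : ∀ y ∈ Ioi (0:ℝ), y ^ (-δ-1) * (1 - ((1 + θ * y) ^ n)⁻¹)
      = θ ^ (1+δ) * h (θ * y) := by
    intro y hy
    have hy0 : (0:ℝ) < y := hy
    rw [hhdef]
    simp only
    rw [Real.mul_rpow hθ.le hy0.le, ← mul_assoc, ← mul_assoc, ← Real.rpow_add hθ,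
      show (1+δ)+(-δ-1) = 0 by ring, Real.rpow_zero, one_mul]
  have hstep2 : ∫ y in Ioi (0:ℝ), g y
      = α⁻¹ * (θ ^ (1+δ) * (θ⁻¹ * ∫ z in Ioi (0:ℝ), h z)) := by
    rw [hgdef]
    simp only
    rw [MeasureTheory.integral_const_mul]
    congr 1
    rw [setIntegral_congr_fun measurableSet_Ioi hpt3, MeasureTheory.integral_const_mul]
    congr 1
    have := MeasureTheory.integral_comp_mul_left_Ioi h 0 hθ
    rw [mul_zero] at this
    rw [this, smul_eq_mul]
  have hK := (Kint hδ0 hδ1 n hn).2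
  rw [hstep1, hstep2, hK]
  -- final arithmetic
  have hθδ : θ ^ (1+δ) = θ * θ ^ δ := by
    rw [Real.rpow_add hθ, Real.rpow_one]
  rw [hθδ, hδ]
  have hδ0' : (2:ℝ)/α ≠ 0 := by positivity
  field_simp
end
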